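/- For β ≤ 0 and θ > 0, the initial value problem x'(t) = -β - (θ²/2)x(t)², x(0) = x₀ with x₀ ≥ 0, has a unique solution on [0, ∞). -/

import Mathlib

open Set Real

lemma fluid_unique (β θ : ℝ) (x y : ℝ → ℝ)
    (hx : ∀ t ∈ Set.Ici (0 : ℝ),
      HasDerivWithinAt x (-β - θ ^ 2 / 2 * (x t) ^ 2) (Set.Ici 0) t)
    (hy : ∀ t ∈ Set.Ici (0 : ℝ),
      HasDerivWithinAt y (-β - θ ^ 2 / 2 * (y t) ^ 2) (Set.Ici 0) t)
    (h0 : y 0 = x 0) : Set.EqOn y x (Set.Ici 0) := by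
  intro b hb
  have hb' : (0:ℝ) ≤ b := hb
  have hcx : ContinuousOn x (Icc 0 b) := fun s hs =>
    ((hx s hs.1).differentiableWithinAt.continuousWithinAt).mono Icc_subset_Ici_self
  have hcy : ContinuousOn y (Icc 0 b) := fun s hs =>
    ((hy s hs.1).differentiableWithinAt.continuousWithinAt).mono Icc_subset_Ici_self
  obtain ⟨Cx, hCx⟩ := isCompact_Icc.exists_bound_of_continuousOn hcx
  obtain ⟨Cy, hCy⟩ := isCompact_Icc.exists_bound_of_continuousOn hcy
  set C : ℝ := max Cx Cy with hC
  have hC0 : 0 ≤ C := le_trans (norm_nonneg (x 0))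
    (le_trans (hCx 0 ⟨le_refl _, hb'⟩) (le_max_left _ _))
  have hxm : ∀ s ∈ Icc (0:ℝ) b, x s ∈ Icc (-C) C := fun s hs => by
    have := (hCx s hs).trans (le_max_left Cx Cy)
    rw [Real.norm_eq_abs, abs_le] at this; exact this
  have hym : ∀ s ∈ Icc (0:ℝ) b, y s ∈ Icc (-C) C := fun s hs => by
    have := (hCy s hs).trans (le_max_right Cx Cy)
    rw [Real.norm_eq_abs, abs_le] at this; exact this
  have hlip : ∀ t : ℝ, LipschitzOnWith (Real.toNNReal (θ^2 * C))
      (fun z : ℝ => -β - θ ^ 2 / 2 * z ^ 2) (Icc (-C) C) := by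
    intro t
    apply LipschitzOnWith.of_dist_le_mul
    intro z hz w hw
    rw [Real.dist_eq, Real.dist_eq, Real.coe_toNNReal _ (by positivity)]
    have h1 : (-β - θ ^ 2 / 2 * z ^ 2) - (-β - θ ^ 2 / 2 * w ^ 2)
        = (-(θ^2/2) * (z + w)) * (z - w) := by ring
    rw [h1, abs_mul]
    have h2 : |(-(θ^2/2) * (z + w))| ≤ θ^2 * C := by
      rw [abs_mul, abs_neg, abs_of_nonneg (by positivity : (0:ℝ) ≤ θ^2/2)]
      have := abs_add_le z w
      have hz' := abs_le.mpr ⟨hz.1, hz.2⟩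
      have hw' := abs_le.mpr ⟨hw.1, hw.2⟩
      nlinarith [abs_nonneg (z+w), sq_nonneg θ]
    exact mul_le_mul_of_nonneg_right h2 (abs_nonneg _)
  have key : EqOn y x (Icc 0 b) := by
    apply ODE_solution_unique_of_mem_Icc_right
      (v := fun _ z => -β - θ ^ 2 / 2 * z ^ 2) (s := fun _ => Icc (-C) C) (fun t _ => hlip t)
      hcy (fun s hs => ((hy s hs.1).mono (Ici_subset_Ici.mpr hs.1)))
      (fun s hs => hym s ⟨hs.1, hs.2.le⟩) hcx
      (fun s hs => ((hx s hs.1).mono (Ici_subset_Ici.mpr hs.1)))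
      (fun s hs => hxm s ⟨hs.1, hs.2.le⟩) h0
  exact key ⟨hb', le_refl b⟩

lemma fluid_exists_zero (θ x₀ : ℝ) (hθ : 0 < θ) (hx₀ : 0 ≤ x₀) :
    ∃ x : ℝ → ℝ, x 0 = x₀ ∧
      ∀ t ∈ Set.Ici (0 : ℝ),
        HasDerivWithinAt x (-(0:ℝ) - θ ^ 2 / 2 * (x t) ^ 2) (Set.Ici 0) t := by
  set a : ℝ := θ^2/2 with ha
  refine ⟨fun t => x₀ / (1 + a * x₀ * t), by simp, ?_⟩
  intro t ht
  have hD : 1 + a * x₀ * t ≠ 0 := by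
    have ht' : (0:ℝ) ≤ t := ht
    have : 0 ≤ a * x₀ * t := mul_nonneg (mul_nonneg (by positivity) hx₀) ht'
    linarith
  have hd : HasDerivAt (fun t : ℝ => x₀ / (1 + a * x₀ * t))
      ((0 * (1 + a * x₀ * t) - x₀ * (a * x₀)) / (1 + a * x₀ * t)^2) t := by
    have h := (hasDerivAt_const t x₀).div
      (((hasDerivAt_id t).const_mul (a * x₀)).const_add 1) hD
    simp only [id, mul_one] at h
    exact h
  have heq : (0 * (1 + a * x₀ * t) - x₀ * (a * x₀)) / (1 + a * x₀ * t)^2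
      = -(0:ℝ) - a * (x₀ / (1 + a * x₀ * t)) ^ 2 := by
    field_simp
    ring
  rw [heq] at hd
  exact hd.hasDerivWithinAt

lemma fluid_exists_neg (β θ x₀ : ℝ) (hβ : β < 0) (hθ : 0 < θ) (hx₀ : 0 ≤ x₀) :
    ∃ x : ℝ → ℝ, x 0 = x₀ ∧
      ∀ t ∈ Set.Ici (0 : ℝ),
        HasDerivWithinAt x (-β - θ ^ 2 / 2 * (x t) ^ 2) (Set.Ici 0) t := by
  set a : ℝ := θ^2/2 with ha
  have ha0 : 0 < a := by positivity
  set c : ℝ := -β with hc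
  have hc0 : 0 < c := by simp [hc]; linarith
  set p : ℝ := Real.sqrt (c/a) with hp
  have hp0 : 0 < p := Real.sqrt_pos.mpr (by positivity)
  have hp2 : a * p^2 = c := by
    rw [hp, Real.sq_sqrt (by positivity : (0:ℝ) ≤ c/a)]
    field_simp
  set ω : ℝ := Real.sqrt (a*c) with hω
  have hω0 : 0 < ω := Real.sqrt_pos.mpr (by positivity)
  have hpω : p * ω = c := by
    rw [hp, hω, ← Real.sqrt_mul (by positivity)]
    rw [show c/a*(a*c) = c^2 by field_simp]
    exact Real.sqrt_sq hc0.le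
  set N : ℝ → ℝ := fun t => x₀ * Real.cosh (ω*t) + p * Real.sinh (ω*t) with hN
  set D : ℝ → ℝ := fun t => p * Real.cosh (ω*t) + x₀ * Real.sinh (ω*t) with hD
  have hDpos : ∀ t : ℝ, 0 ≤ t → 0 < D t := by
    intro t ht
    have h1 : (1:ℝ) ≤ Real.cosh (ω*t) := Real.one_le_cosh _
    have h2 : (0:ℝ) ≤ Real.sinh (ω*t) := by
      rw [Real.sinh_nonneg_iff]  -- guess
      positivity
    show (0:ℝ) < p * Real.cosh (ω*t) + x₀ * Real.sinh (ω*t)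
    nlinarith
  refine ⟨fun t => p * N t / D t, ?_, ?_⟩
  · simp [hN, hD]
    field_simp
  · intro t ht
    have ht' : (0:ℝ) ≤ t := ht
    have hDne : D t ≠ 0 := (hDpos t ht').ne'
    have hch : HasDerivAt (fun s : ℝ => Real.cosh (ω*s)) (Real.sinh (ω*t) * ω) t := by
      simpa [Function.comp_def] using (Real.hasDerivAt_cosh (ω*t)).comp t ((hasDerivAt_id t).const_mul ω)
    have hsh : HasDerivAt (fun s : ℝ => Real.sinh (ω*s)) (Real.cosh (ω*t) * ω) t := by
      simpa [Function.comp_def] using (Real.hasDerivAt_sinh (ω*t)).comp t ((hasDerivAt_id t).const_mul ω)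
    have hNd : HasDerivAt N (x₀ * (Real.sinh (ω*t) * ω) + p * (Real.cosh (ω*t) * ω)) t :=
      (hch.const_mul x₀).add (hsh.const_mul p)
    have hDd : HasDerivAt D (p * (Real.sinh (ω*t) * ω) + x₀ * (Real.cosh (ω*t) * ω)) t :=
      (hch.const_mul p).add (hsh.const_mul x₀)
    have hd : HasDerivAt (fun t => p * N t / D t)
        (((p * (x₀ * (Real.sinh (ω*t) * ω) + p * (Real.cosh (ω*t) * ω))) * D t
          - (p * N t) * (p * (Real.sinh (ω*t) * ω) + x₀ * (Real.cosh (ω*t) * ω))) / D t ^ 2) t :=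
      (hNd.const_mul p).div hDd hDne
    have h3 : (p * (x₀ * (Real.sinh (ω*t) * ω) + p * (Real.cosh (ω*t) * ω))) * D t
          - (p * N t) * (p * (Real.sinh (ω*t) * ω) + x₀ * (Real.cosh (ω*t) * ω))
        = c * D t ^ 2 - a * p ^ 2 * N t ^ 2 := by
      simp only [hN, hD]
      linear_combination ((p * Real.cosh (ω*t) + x₀ * Real.sinh (ω*t))^2
          - (x₀ * Real.cosh (ω*t) + p * Real.sinh (ω*t))^2) * hpω
        + (x₀ * Real.cosh (ω*t) + p * Real.sinh (ω*t))^2 * hp2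
    have h2 : -β - a * (p * N t / D t) ^ 2 = (c * D t ^ 2 - a * p ^ 2 * N t ^ 2) / D t ^ 2 := by
      have hβc : -β = c := by rw [hc]
      rw [hβc]
      field_simp
    rw [h3, ← h2] at hd
    exact hd.hasDerivWithinAt

theorem fluid_IVP_exists_unique (β θ x₀ : ℝ) (hβ : β ≤ 0) (hθ : 0 < θ) (hx₀ : 0 ≤ x₀) :
    ∃ x : ℝ → ℝ,
      (x 0 = x₀ ∧
        ∀ t ∈ Set.Ici (0 : ℝ),
          HasDerivWithinAt x (-β - θ ^ 2 / 2 * (x t) ^ 2) (Set.Ici 0) t) ∧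
      ∀ y : ℝ → ℝ,
        (y 0 = x₀ ∧
          ∀ t ∈ Set.Ici (0 : ℝ),
            HasDerivWithinAt y (-β - θ ^ 2 / 2 * (y t) ^ 2) (Set.Ici 0) t) →
        Set.EqOn y x (Set.Ici 0) := by
  have hex : ∃ x : ℝ → ℝ, x 0 = x₀ ∧
      ∀ t ∈ Set.Ici (0 : ℝ),
        HasDerivWithinAt x (-β - θ ^ 2 / 2 * (x t) ^ 2) (Set.Ici 0) t := by
    rcases lt_or_eq_of_le hβ with h | h
    · exact fluid_exists_neg β θ x₀ h hθ hx₀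
    · subst h
      exact fluid_exists_zero θ x₀ hθ hx₀
  obtain ⟨x, hx0, hx⟩ := hex
  refine ⟨x, ⟨hx0, hx⟩, ?_⟩
  rintro y ⟨hy0, hy⟩
  exact fluid_unique β θ x y hx hy (by rw [hy0, hx0])
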